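/- arXiv:2006.14789 — 2 statements merged into one kernel-verified Lean document; each statement's English description precedes it below -/
import Mathlib

section
/- Let W : ℝ → ℝ be differentiable with |W'(y)| ≤ (1 + y²)^{-1/3} for all y ∈ ℝ. Then for every λ > 0 the rescaled function f_λ(x) = λ^{1/2} W(λ^{-3/2} x) satisfies the uniform Hölder-1/3 bound |f_λ(x) - f_λ(x')| ≤ 6 |x - x'|^{1/3} for all x, x' ∈ ℝ, with constant independent of λ. -/
private lemma cuberoot_cont : Continuous fun y : ℝ => y ^ ((1:ℝ)/3) := by
  rw [continuous_iff_continuousAt]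
  intro x
  exact Real.continuousAt_rpow_const x _ (Or.inr (by norm_num))

private lemma cuberoot_subadd {s t : ℝ} (hs : 0 ≤ s) (hst : s ≤ t) :
    t ^ ((1:ℝ)/3) - s ^ ((1:ℝ)/3) ≤ (t - s) ^ ((1:ℝ)/3) := by
  have ht : 0 ≤ t := hs.trans hst
  set u := s ^ ((1:ℝ)/3) with hu
  set v := (t - s) ^ ((1:ℝ)/3) with hv
  have hu0 : 0 ≤ u := Real.rpow_nonneg hs _
  have hv0 : 0 ≤ v := Real.rpow_nonneg (by linarith) _
  have hu3 : u ^ (3:ℕ) = s := by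
    rw [hu, ← Real.rpow_natCast (s ^ ((1:ℝ)/3)) 3, ← Real.rpow_mul hs]
    norm_num
  have hv3 : v ^ (3:ℕ) = t - s := by
    rw [hv, ← Real.rpow_natCast ((t - s) ^ ((1:ℝ)/3)) 3, ← Real.rpow_mul (by linarith)]
    norm_num
  have key : t ≤ (u + v) ^ (3:ℕ) := by
    nlinarith [hu3, hv3, hu0, hv0, mul_nonneg (mul_nonneg hu0 hu0) hv0,
      mul_nonneg hu0 (mul_nonneg hv0 hv0)]
  have : t ^ ((1:ℝ)/3) ≤ ((u + v) ^ (3:ℕ)) ^ ((1:ℝ)/3) :=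
    Real.rpow_le_rpow ht key (by norm_num)
  have h2 : ((u + v) ^ (3:ℕ)) ^ ((1:ℝ)/3) = u + v := by
    rw [← Real.rpow_natCast (u + v) 3, ← Real.rpow_mul (by linarith)]
    norm_num
  rw [h2] at this
  linarith

/-- One-sided comparison with `3 y^{1/3}` on `[0, ∞)`. -/
private lemma mono_aux (W : ℝ → ℝ) (hW : Differentiable ℝ W)
    (hW' : ∀ y : ℝ, deriv W y ≤ (1 + y ^ 2) ^ (-(1 : ℝ) / 3))
    {s t : ℝ} (hs : 0 ≤ s) (hst : s ≤ t) :
    W t - W s ≤ 3 * (t ^ ((1:ℝ)/3) - s ^ ((1:ℝ)/3)) := by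
  set g : ℝ → ℝ := fun y => 3 * y ^ ((1:ℝ)/3) - W y with hg
  have hint : interior (Set.Icc s t) = Set.Ioo s t := interior_Icc
  have hpos : ∀ y ∈ Set.Ioo s t, 0 < y := fun y hy => lt_of_le_of_lt hs hy.1
  have hdrpow : ∀ y ∈ Set.Ioo s t,
      HasDerivAt g (3 * ((1:ℝ)/3 * y ^ ((1:ℝ)/3 - 1)) - deriv W y) y := by
    intro y hy
    exact (((Real.hasDerivAt_rpow_const (p := (1:ℝ)/3)
      (Or.inl (hpos y hy).ne')).const_mul 3).sub (hW y).hasDerivAt)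
  have hmono : MonotoneOn g (Set.Icc s t) := by
    apply monotoneOn_of_deriv_nonneg (convex_Icc s t)
    · exact ((continuous_const.mul cuberoot_cont).sub hW.continuous).continuousOn
    · rw [hint]
      intro y hy
      exact (hdrpow y hy).differentiableAt.differentiableWithinAt
    · rw [hint]
      intro y hy
      rw [(hdrpow y hy).deriv]
      have hy0 : 0 < y := hpos y hy
      have h1 : (1 + y ^ 2 : ℝ) ^ (-(1:ℝ)/3) ≤ (y ^ 2 : ℝ) ^ (-(1:ℝ)/3) :=
        Real.rpow_le_rpow_of_nonpos (by positivity) (by linarith) (by norm_num)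
      have h2 : (y ^ 2 : ℝ) ^ (-(1:ℝ)/3) = y ^ ((1:ℝ)/3 - 1) := by
        rw [← Real.rpow_natCast y 2, ← Real.rpow_mul hy0.le]
        norm_num
      have h3 : deriv W y ≤ y ^ ((1:ℝ)/3 - 1) := (hW' y).trans (h1.trans_eq h2)
      linarith
  have := hmono (Set.left_mem_Icc.2 hst) (Set.right_mem_Icc.2 hst) hst
  simp only [hg] at this
  linarith

private lemma abs_aux (W : ℝ → ℝ) (hW : Differentiable ℝ W)
    (hW' : ∀ y : ℝ, |deriv W y| ≤ (1 + y ^ 2) ^ (-(1 : ℝ) / 3))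
    {s t : ℝ} (hs : 0 ≤ s) (hst : s ≤ t) :
    |W t - W s| ≤ 3 * (t ^ ((1:ℝ)/3) - s ^ ((1:ℝ)/3)) := by
  rw [abs_sub_le_iff]
  constructor
  · have := mono_aux W hW (fun y => (abs_le.1 (hW' y)).2) hs hst
    linarith
  · have := mono_aux (fun y => -W y) hW.neg
      (fun y => by
        rw [deriv.fun_neg]
        have := (abs_le.1 (hW' y)).1
        linarith) hs hst
    linarith

/-- Global Hölder-1/3 bound for `W` itself. -/
private lemma holder_aux (W : ℝ → ℝ) (hW : Differentiable ℝ W)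
    (hW' : ∀ y : ℝ, |deriv W y| ≤ (1 + y ^ 2) ^ (-(1 : ℝ) / 3))
    (a b : ℝ) (hba : b ≤ a) : |W a - W b| ≤ 6 * |a - b| ^ ((1:ℝ)/3) := by
  have habs : |a - b| = a - b := abs_of_nonneg (by linarith)
  rw [habs]
  have hV : Differentiable ℝ (fun y => W (-y)) := hW.comp (differentiable_neg)
  have hV' : ∀ y : ℝ, |deriv (fun y => W (-y)) y| ≤ (1 + y ^ 2) ^ (-(1 : ℝ) / 3) := by
    intro y
    rw [deriv_comp_neg, abs_neg]
    have := hW' (-y)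
    simpa using this
  rcases le_or_gt 0 b with hb | hb
  · have h := abs_aux W hW hW' hb hba
    have h2 := cuberoot_subadd hb hba
    have h3 : (0:ℝ) ≤ (a - b) ^ ((1:ℝ)/3) := Real.rpow_nonneg (by linarith) _
    linarith
  rcases le_or_gt a 0 with ha | ha
  · -- a ≤ 0 : use V y = W(-y) on [-a, -b]
    have h := abs_aux _ hV hV' (s := -a) (t := -b) (by linarith) (by linarith)
    simp only [neg_neg] at h
    have h2 := cuberoot_subadd (s := -a) (t := -b) (by linarith) (by linarith)
    rw [abs_sub_comm]
    have : (-b - -a : ℝ) = a - b := by ring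
    rw [this] at h2
    have h3 : (0:ℝ) ≤ (a - b) ^ ((1:ℝ)/3) := Real.rpow_nonneg (by linarith) _
    linarith
  · -- b < 0 < a : split at 0
    have h1 := abs_aux W hW hW' (s := 0) (t := a) le_rfl ha.le
    have h2 := abs_aux _ hV hV' (s := 0) (t := -b) le_rfl (by linarith)
    simp only [neg_neg, neg_zero] at h1 h2
    have hz : (0:ℝ) ^ ((1:ℝ)/3) = 0 := by
      rw [Real.zero_rpow]; norm_num
    rw [hz] at h1 h2
    have ha1 : a ^ ((1:ℝ)/3) ≤ (a - b) ^ ((1:ℝ)/3) :=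
      Real.rpow_le_rpow ha.le (by linarith) (by norm_num)
    have hb1 : (-b) ^ ((1:ℝ)/3) ≤ (a - b) ^ ((1:ℝ)/3) :=
      Real.rpow_le_rpow (by linarith) (by linarith) (by norm_num)
    have h2' : |W 0 - W b| ≤ 3 * ((-b) ^ ((1:ℝ)/3) - 0) := by
      rw [abs_sub_comm]; exact h2
    have h4 := abs_sub_le (W a) (W 0) (W b)
    linarith

private lemma holder (W : ℝ → ℝ) (hW : Differentiable ℝ W)
    (hW' : ∀ y : ℝ, |deriv W y| ≤ (1 + y ^ 2) ^ (-(1 : ℝ) / 3))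
    (a b : ℝ) : |W a - W b| ≤ 6 * |a - b| ^ ((1:ℝ)/3) := by
  rcases le_total b a with h | h
  · exact holder_aux W hW hW' a b h
  · rw [abs_sub_comm, abs_sub_comm a b]
    exact holder_aux W hW hW' b a h

/-- Uniform Hölder-1/3 bound: if `|W'(y)| ≤ (1+y²)^{-1/3}`, then for every `λ > 0` the
rescaling `f_λ(x) = λ^{1/2} W(λ^{-3/2}x)` satisfies `|f_λ(x) - f_λ(x')| ≤ 6|x-x'|^{1/3}`. -/
theorem selfsimilar_holder_bound (W : ℝ → ℝ) (hW : Differentiable ℝ W)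
    (hW' : ∀ y : ℝ, |deriv W y| ≤ (1 + y ^ 2) ^ (-(1 : ℝ) / 3)) :
    ∀ lam : ℝ, 0 < lam → ∀ x x' : ℝ,
      |lam ^ ((1 : ℝ) / 2) * W (x / lam ^ ((3 : ℝ) / 2))
          - lam ^ ((1 : ℝ) / 2) * W (x' / lam ^ ((3 : ℝ) / 2))|
        ≤ 6 * |x - x'| ^ ((1 : ℝ) / 3) := by
  intro lam hlam x x'
  set a := x / lam ^ ((3:ℝ)/2) with ha
  set b := x' / lam ^ ((3:ℝ)/2) with hb
  have hl32 : (0:ℝ) < lam ^ ((3:ℝ)/2) := Real.rpow_pos_of_pos hlam _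
  have hl12 : (0:ℝ) < lam ^ ((1:ℝ)/2) := Real.rpow_pos_of_pos hlam _
  have hab : |a - b| = |x - x'| / lam ^ ((3:ℝ)/2) := by
    rw [ha, hb, div_sub_div_same, abs_div, abs_of_pos hl32]
  have hW6 := holder W hW hW' a b
  have key : |a - b| ^ ((1:ℝ)/3) = |x - x'| ^ ((1:ℝ)/3) / lam ^ ((1:ℝ)/2) := by
    rw [hab, Real.div_rpow (abs_nonneg _) hl32.le]
    congr 1
    rw [← Real.rpow_mul hlam.le]
    norm_num
  calc |lam ^ ((1:ℝ)/2) * W a - lam ^ ((1:ℝ)/2) * W b|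
      = lam ^ ((1:ℝ)/2) * |W a - W b| := by
        rw [← mul_sub, abs_mul, abs_of_pos hl12]
    _ ≤ lam ^ ((1:ℝ)/2) * (6 * |a - b| ^ ((1:ℝ)/3)) := by
        exact mul_le_mul_of_nonneg_left hW6 hl12.le
    _ = 6 * |x - x'| ^ ((1:ℝ)/3) := by
        rw [key]; field_simp
end

section
/- Let s₀ ≥ 0, a ≥ 0, and let Φ : [s₀, ∞) → ℝ be a measurable function with |Φ(s)| ≥ min(|e^{s/2} - a|, e^{s/2}) for all s ≥ s₀. Then for all real numbers σ₁, σ₂ with 0 ≤ σ₁ ≤ 1/2 and σ₂ > 2σ₁, the integral ∫_{s₀}^{∞} e^{σ₁ s} (1 + |Φ(s)|)^{-σ₂} ds is finite and bounded by a constant depending only on σ₁ and σ₂ (independent of s₀ and a). -/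
open MeasureTheory

section Helpers
open Real Set


lemma ftc_piece (c τ L : ℝ) (hc : 0 < c) (hτ : τ ≠ 1) (hL : 0 ≤ L) :
    ∫ v in (0:ℝ)..L, (1 + c*v) ^ (-τ) = ((1+c*L)^(1-τ) - 1)/(c*(1-τ)) := by
  have hbase : ∀ v : ℝ, v ∈ Set.uIcc 0 L → (0:ℝ) < 1 + c*v := by
    intro v hv
    rw [Set.uIcc_of_le hL] at hv
    nlinarith [hv.1, hc.le]
  have hderiv : ∀ v ∈ Set.uIcc 0 L,
      HasDerivAt (fun v => (1+c*v)^(1-τ)/(c*(1-τ))) ((1+c*v)^(-τ)) v := by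
    intro v hv
    have h1 : HasDerivAt (fun v : ℝ => 1 + c*v) c v := by
      simpa using ((hasDerivAt_id v).const_mul c).const_add 1
    have h2 := (h1.rpow_const (p := 1-τ) (Or.inl (hbase v hv).ne'))
    have h3 := h2.div_const (c*(1-τ))
    refine h3.congr_deriv ?_
    have hne : (1:ℝ) - τ ≠ 0 := sub_ne_zero.mpr (Ne.symm hτ)
    rw [show (1-τ)-1 = -τ by ring]
    field_simp
  have hint : IntervalIntegrable (fun v : ℝ => (1+c*v)^(-τ)) volume 0 L := by
    apply ContinuousOn.intervalIntegrable
    apply ContinuousOn.rpow_const (by fun_prop)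
    intro v hv; exact Or.inl (hbase v hv).ne'
  have := intervalIntegral.integral_eq_sub_of_hasDerivAt hderiv hint
  rw [this]
  have : (1:ℝ) + c*0 = 1 := by ring
  rw [this, Real.one_rpow]
  ring

lemma wcont (c τ t : ℝ) (hc : 0 ≤ c) : Continuous (fun s : ℝ => (1+c*|s-t|)^(-τ)) := by
  apply Continuous.rpow_const (by fun_prop)
  intro s
  have : (0:ℝ) < 1 + c*|s-t| := by positivity
  exact Or.inl this.ne'

lemma window_eq (c τ L t : ℝ) (hc : 0 < c) (hτ : τ ≠ 1) (hL : 0 ≤ L) :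
    ∫ s in Icc (t-L) (t+L), (1+c*|s-t|)^(-τ) = 2*(((1+c*L)^(1-τ) - 1)/(c*(1-τ))) := by
  have hcont := wcont c τ t hc.le
  have hi1 : IntegrableOn (fun s : ℝ => (1+c*|s-t|)^(-τ)) (Ioc (t-L) t) :=
    (hcont.integrableOn_Icc (a := t-L) (b := t)).mono_set Ioc_subset_Icc_self
  have hi2 : IntegrableOn (fun s : ℝ => (1+c*|s-t|)^(-τ)) (Ioc t (t+L)) :=
    (hcont.integrableOn_Icc (a := t) (b := t+L)).mono_set Ioc_subset_Icc_self
  rw [integral_Icc_eq_integral_Ioc,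
    ← Set.Ioc_union_Ioc_eq_Ioc (by linarith : t-L ≤ t) (by linarith : t ≤ t+L),
    setIntegral_union (Set.Ioc_disjoint_Ioc_of_le le_rfl) measurableSet_Ioc hi1 hi2]
  have hleft : ∫ s in Ioc (t-L) t, (1+c*|s-t|)^(-τ)
      = ((1+c*L)^(1-τ) - 1)/(c*(1-τ)) := by
    rw [setIntegral_congr_fun measurableSet_Ioc
      (g := fun s => ((1:ℝ)+c*(t-s))^(-τ)) ?_]
    · rw [← intervalIntegral.integral_of_le (by linarith : t-L ≤ t)]
      have := intervalIntegral.integral_comp_sub_left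
        (a := t-L) (b := t) (fun v : ℝ => (1+c*v)^(-τ)) t
      rw [this]
      have e1 : t - t = 0 := by ring
      have e2 : t - (t-L) = L := by ring
      rw [e1, e2, ftc_piece c τ L hc hτ hL]
    · intro s hs
      show (1+c*|s-t|)^(-τ) = (1+c*(t-s))^(-τ)
      have : |s - t| = t - s := by
        rw [abs_of_nonpos (by linarith [hs.2])]; ring
      rw [this]
  have hright : ∫ s in Ioc t (t+L), (1+c*|s-t|)^(-τ)
      = ((1+c*L)^(1-τ) - 1)/(c*(1-τ)) := by
    rw [setIntegral_congr_fun measurableSet_Ioc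
      (g := fun s => ((1:ℝ)+c*(s-t))^(-τ)) ?_]
    · rw [← intervalIntegral.integral_of_le (by linarith : t ≤ t+L)]
      have := intervalIntegral.integral_comp_sub_right
        (a := t) (b := t+L) (fun v : ℝ => (1+c*v)^(-τ)) t
      rw [this]
      have e1 : t - t = 0 := by ring
      have e2 : t + L - t = L := by ring
      rw [e1, e2, ftc_piece c τ L hc hτ hL]
    · intro s hs
      show (1+c*|s-t|)^(-τ) = (1+c*(s-t))^(-τ)
      rw [abs_of_nonneg (by linarith [hs.1] : (0:ℝ) ≤ s - t)]
  rw [hleft, hright]; ring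

lemma mid_bound (σ₁ σ₂ : ℝ) (h1 : 0 ≤ σ₁) (h2 : σ₁ ≤ 1/2) (h3 : 2*σ₁ < σ₂) :
    ∃ τ B : ℝ, 0 < τ ∧ 2*σ₁ < τ ∧ τ ≤ σ₂ ∧ τ ≠ 1 ∧ 0 ≤ B ∧
      ∀ a : ℝ, 1/2 ≤ a →
        (2*a^(2*σ₁)) * (2*(((1+(a/4)*(2*Real.log 2))^(1-τ) - 1)/((a/4)*(1-τ)))) ≤ B := by
  have hlog2 : Real.log 2 ≤ 1 := by
    have := Real.log_le_sub_one_of_pos (by norm_num : (0:ℝ) < 2); linarith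
  rcases le_or_gt σ₂ 1 with hσle | hσgt
  · -- τ < 1 case
    set τ := (2*σ₁+σ₂)/2 with hτdef
    have hτlt1 : τ < 1 := by simp only [hτdef]; linarith
    have hτgt : 2*σ₁ < τ := by simp only [hτdef]; linarith
    have h1τ : 0 < 1 - τ := by linarith
    refine ⟨τ, 320/(1-τ), by linarith, hτgt, by simp only [hτdef]; linarith,
      by linarith, by positivity, ?_⟩
    intro a ha
    have ha0 : (0:ℝ) < a := by linarith
    have hc0 : (0:ℝ) < a/4 := by linarith
    have hN : (1+(a/4)*(2*Real.log 2))^(1-τ) - 1 ≤ 10 * a^(1-τ) := by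
      have k1 : (1+(a/4)*(2*Real.log 2))^(1-τ) ≤ (10*(a/4))^(1-τ) := by
        apply Real.rpow_le_rpow (by positivity) ?_ h1τ.le
        nlinarith
      have k2 : (10*(a/4):ℝ)^(1-τ) = (10:ℝ)^(1-τ) * (a/4)^(1-τ) :=
        Real.mul_rpow (by norm_num) hc0.le
      have k3 : (10:ℝ)^(1-τ) ≤ 10 := by
        calc (10:ℝ)^(1-τ) ≤ (10:ℝ)^(1:ℝ) :=
              Real.rpow_le_rpow_of_exponent_le (by norm_num) (by linarith)
          _ = 10 := Real.rpow_one 10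
      have k4 : (a/4:ℝ)^(1-τ) ≤ a^(1-τ) :=
        Real.rpow_le_rpow hc0.le (by linarith) h1τ.le
      have k5 : (10:ℝ)^(1-τ) * (a/4)^(1-τ) ≤ 10 * a^(1-τ) :=
        mul_le_mul k3 k4 (Real.rpow_nonneg hc0.le _) (by norm_num)
      calc (1+(a/4)*(2*Real.log 2))^(1-τ) - 1 ≤ (10*(a/4))^(1-τ) := by linarith
        _ = (10:ℝ)^(1-τ) * (a/4)^(1-τ) := k2
        _ ≤ 10 * a^(1-τ) := k5
    have ha2 : a^(2*σ₁-τ) ≤ 2 := by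
      calc a^(2*σ₁-τ) ≤ (1/2:ℝ)^(2*σ₁-τ) :=
            Real.rpow_le_rpow_of_nonpos (by norm_num) ha (by linarith)
        _ = (2:ℝ)^(τ-2*σ₁) := by
            rw [one_div, Real.inv_rpow (by norm_num), ← Real.rpow_neg (by norm_num),
              neg_sub]
        _ ≤ (2:ℝ)^(1:ℝ) := Real.rpow_le_rpow_of_exponent_le one_le_two (by linarith)
        _ = 2 := Real.rpow_one 2
    have hE1 : a^(2*σ₁) * ((1+(a/4)*(2*Real.log 2))^(1-τ) - 1) ≤ 20 * a := by
      calc a^(2*σ₁) * ((1+(a/4)*(2*Real.log 2))^(1-τ) - 1)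
          ≤ a^(2*σ₁) * (10 * a^(1-τ)) :=
            mul_le_mul_of_nonneg_left hN (Real.rpow_nonneg ha0.le _)
        _ = 10 * (a^(2*σ₁) * a^(1-τ)) := by ring
        _ = 10 * (a^(1:ℝ) * a^(2*σ₁-τ)) := by
            rw [← Real.rpow_add ha0, ← Real.rpow_add ha0]; ring_nf
        _ = 10 * (a * a^(2*σ₁-τ)) := by rw [Real.rpow_one]
        _ ≤ 10 * (a * 2) := by
            have := mul_le_mul_of_nonneg_left ha2 ha0.le
            linarith
        _ = 20 * a := by ring
    have hM : (0:ℝ) < (a/4)*(1-τ) := by positivity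
    calc (2*a^(2*σ₁)) * (2*(((1+(a/4)*(2*Real.log 2))^(1-τ) - 1)/((a/4)*(1-τ))))
        = (a^(2*σ₁) * ((1+(a/4)*(2*Real.log 2))^(1-τ) - 1)) * 4 / ((a/4)*(1-τ)) := by
          ring
      _ ≤ (20*a) * 4 / ((a/4)*(1-τ)) :=
          (div_le_div_iff_of_pos_right hM).mpr (by nlinarith)
      _ = (a*80) / (a*((1-τ)/4)) := by ring
      _ = 80 / ((1-τ)/4) := mul_div_mul_left _ _ ha0.ne'
      _ = 320/(1-τ) := by rw [div_div_eq_mul_div]; ring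
  · -- τ > 1 case
    set τ := (1+σ₂)/2 with hτdef
    have hτgt1 : 1 < τ := by simp only [hτdef]; linarith
    have hτσ : τ ≤ σ₂ := by simp only [hτdef]; linarith
    refine ⟨τ, 32/(τ-1), by linarith, by linarith, hτσ, by linarith,
      le_of_lt (div_pos (by norm_num) (by linarith)), ?_⟩
    intro a ha
    have ha0 : (0:ℝ) < a := by linarith
    have hc0 : (0:ℝ) < a/4 := by linarith
    have hlog2' : (0:ℝ) < Real.log 2 := Real.log_pos one_lt_two
    have hbase : (1:ℝ) ≤ 1+(a/4)*(2*Real.log 2) := by nlinarith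
    have hNle : (1+(a/4)*(2*Real.log 2))^(1-τ) ≤ 1 :=
      Real.rpow_le_one_of_one_le_of_nonpos hbase (by linarith)
    have hNpos : (0:ℝ) < (1+(a/4)*(2*Real.log 2))^(1-τ) :=
      Real.rpow_pos_of_pos (by linarith) _
    have hMneg : (a/4)*(1-τ) < 0 := by nlinarith
    have hMpos : (0:ℝ) < (a/4)*(τ-1) := by nlinarith
    have h8 : (0:ℝ) < a*(τ-1) := by nlinarith
    have hdiv : ((1+(a/4)*(2*Real.log 2))^(1-τ) - 1)/((a/4)*(1-τ))
        ≤ 4/(a*(τ-1)) := by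
      have hrw : ((1+(a/4)*(2*Real.log 2))^(1-τ) - 1)/((a/4)*(1-τ))
          = (1 - (1+(a/4)*(2*Real.log 2))^(1-τ))/((a/4)*(τ-1)) := by
        rw [div_eq_div_iff hMneg.ne hMpos.ne']
        ring
      rw [hrw]
      calc (1 - (1+(a/4)*(2*Real.log 2))^(1-τ))/((a/4)*(τ-1))
          ≤ 1/((a/4)*(τ-1)) := (div_le_div_iff_of_pos_right hMpos).mpr (by linarith)
        _ = 4/(a*(τ-1)) := by rw [div_eq_div_iff hMpos.ne' h8.ne']; ring
    have ha2 : a^(2*σ₁) ≤ 2*a := by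
      have : a^(2*σ₁-1) ≤ 2 := by
        calc a^(2*σ₁-1) ≤ (1/2:ℝ)^(2*σ₁-1) :=
              Real.rpow_le_rpow_of_nonpos (by norm_num) ha (by linarith)
          _ = (2:ℝ)^(1-2*σ₁) := by
              rw [one_div, Real.inv_rpow (by norm_num), ← Real.rpow_neg (by norm_num),
                neg_sub]
          _ ≤ (2:ℝ)^(1:ℝ) := Real.rpow_le_rpow_of_exponent_le one_le_two (by linarith)
          _ = 2 := Real.rpow_one 2
      have h'' := Real.rpow_add ha0 1 (2*σ₁-1)
      rw [Real.rpow_one] at h''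
      have h' : a^(2*σ₁) = a * a^(2*σ₁-1) := by
        rw [show (1:ℝ)+(2*σ₁-1) = 2*σ₁ by ring] at h''
        exact h''
      nlinarith
    have h9 : (0:ℝ) < 4/(a*(τ-1)) := div_pos (by norm_num) h8
    calc (2*a^(2*σ₁)) * (2*(((1+(a/4)*(2*Real.log 2))^(1-τ) - 1)/((a/4)*(1-τ))))
        ≤ (2*a^(2*σ₁)) * (2*(4/(a*(τ-1)))) := by
          apply mul_le_mul_of_nonneg_left _ (by positivity)
          linarith
      _ ≤ (2*(2*a)) * (2*(4/(a*(τ-1)))) := by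
          apply mul_le_mul_of_nonneg_right (by linarith) (by linarith)
      _ = (a*32) / (a*(τ-1)) := by ring
      _ = 32/(τ-1) := mul_div_mul_left _ _ ha0.ne'
end Helpers

set_option maxHeartbeats 1600000 in
/-- Escaping-trajectory integrability: if `|Φ(s)| ≥ min(|e^{s/2} - a|, e^{s/2})` on `[s₀,∞)`
with `s₀, a ≥ 0`, then for `0 ≤ σ₁ ≤ 1/2` and `σ₂ > 2σ₁` the integral
`∫_{s₀}^∞ e^{σ₁ s}(1 + |Φ(s)|)^{-σ₂} ds` is finite, bounded by a constant depending only
on `σ₁, σ₂`. -/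
theorem trajectory_weighted_integrability (σ₁ σ₂ : ℝ)
    (h1 : 0 ≤ σ₁) (h2 : σ₁ ≤ 1 / 2) (h3 : 2 * σ₁ < σ₂) :
    ∃ C : ℝ, ∀ (s₀ a : ℝ) (Φ : ℝ → ℝ), 0 ≤ s₀ → 0 ≤ a → Measurable Φ →
      (∀ s, s₀ ≤ s → min |Real.exp (s / 2) - a| (Real.exp (s / 2)) ≤ |Φ s|) →
      IntegrableOn (fun s => Real.exp (σ₁ * s) * (1 + |Φ s|) ^ (-σ₂)) (Set.Ici s₀) ∧
      ∫ s in Set.Ici s₀, Real.exp (σ₁ * s) * (1 + |Φ s|) ^ (-σ₂) ≤ C := by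
  obtain ⟨τ, B, hτ0, hτgt, hτσ, hτ1, hB0, hB⟩ := mid_bound σ₁ σ₂ h1 h2 h3
  have hσ₂0 : 0 < σ₂ := by linarith
  have hb : 0 < σ₂/2 - σ₁ := by linarith
  have hlog2 : (0:ℝ) < Real.log 2 := Real.log_pos one_lt_two
  have hlog2' : Real.log 2 ≤ 1 := by
    have := Real.log_le_sub_one_of_pos (by norm_num : (0:ℝ) < 2); linarith
  set L : ℝ := 2 * Real.log 2 with hLdef
  have hL0 : 0 < L := by rw [hLdef]; linarith
  set f : ℝ → ℝ := fun s => (2:ℝ)^σ₂ * Real.exp (-(σ₂/2 - σ₁)*s) with hfdef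
  have hfint : IntegrableOn f (Set.Ici (0:ℝ)) := by
    rw [integrableOn_Ici_iff_integrableOn_Ioi]
    exact (exp_neg_integrableOn_Ioi 0 hb).const_mul _
  have hf0 : ∀ s, 0 ≤ f s := fun s => by
    simp only [hfdef]; positivity
  refine ⟨(∫ s in Set.Ici (0:ℝ), f s) + max B (8*Real.log 2), ?_⟩
  intro s₀ a Φ hs₀ ha hΦ hmin
  set t : ℝ := 2 * Real.log a with htdef
  set w : ℝ → ℝ := fun s => (2*a^(2*σ₁)) * (1+(a/4)*|s-t|)^(-τ) with hwdef
  have hwcont : Continuous w := continuous_const.mul (wcont (a/4) τ t (by positivity))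
  have hw0 : ∀ s, 0 ≤ w s := fun s => by
    simp only [hwdef]
    have := Real.rpow_nonneg (by positivity : (0:ℝ) ≤ 1+(a/4)*|s-t|) (-τ)
    positivity
  set g : ℝ → ℝ := fun s => f s + (Set.Icc (t-L) (t+L)).indicator w s with hgdef
  have hwIcc : IntegrableOn w (Set.Icc (t-L) (t+L)) := hwcont.integrableOn_Icc
  have hindint : Integrable ((Set.Icc (t-L) (t+L)).indicator w) :=
    hwIcc.integrable_indicator measurableSet_Icc
  have hgint : IntegrableOn g (Set.Ici (0:ℝ)) := hfint.add hindint.integrableOn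
  have hg0 : ∀ s, 0 ≤ g s := fun s =>
    add_nonneg (hf0 s) (Set.indicator_nonneg (fun x _ => hw0 x) s)
  -- pointwise bound
  have hpt : ∀ s ∈ Set.Ici s₀, Real.exp (σ₁ * s) * (1 + |Φ s|) ^ (-σ₂) ≤ g s := by
    intro s hs
    have hs0 : (0:ℝ) ≤ s := le_trans hs₀ hs
    have hx1 : 1 ≤ Real.exp (s/2) := Real.one_le_exp (by linarith)
    have hx0 : 0 < Real.exp (s/2) := Real.exp_pos _
    set m : ℝ := min |Real.exp (s/2) - a| (Real.exp (s/2)) with hmdef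
    have hm0 : 0 ≤ m := le_min (abs_nonneg _) hx0.le
    have hmono : (1 + |Φ s|) ^ (-σ₂) ≤ (1 + m) ^ (-σ₂) :=
      Real.rpow_le_rpow_of_nonpos (by linarith) (by linarith [hmin s hs]) (by linarith)
    have hstep0 : Real.exp (σ₁ * s) * (1 + |Φ s|) ^ (-σ₂)
        ≤ Real.exp (σ₁ * s) * (1 + m) ^ (-σ₂) :=
      mul_le_mul_of_nonneg_left hmono (Real.exp_pos _).le
    have regionA : Real.exp (s/2)/2 ≤ m →
        Real.exp (σ₁ * s) * (1 + |Φ s|) ^ (-σ₂) ≤ g s := by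
      intro hhalf
      have h2' : (1 + m) ^ (-σ₂) ≤ (Real.exp (s/2)/2) ^ (-σ₂) :=
        Real.rpow_le_rpow_of_nonpos (by positivity) (by linarith) (by linarith)
      have h3' : (Real.exp (s/2)/2) ^ (-σ₂) = 2^σ₂ * Real.exp (-(σ₂/2)*s) := by
        rw [Real.div_rpow (Real.exp_nonneg _) (by norm_num : (0:ℝ) ≤ 2),
          Real.rpow_neg (by norm_num : (0:ℝ) ≤ 2), ← Real.exp_mul,
          show (s/2)*(-σ₂) = -(σ₂/2)*s by ring]
        rw [div_eq_mul_inv, inv_inv, mul_comm]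
      have h4' : Real.exp (σ₁ * s) * (2^σ₂ * Real.exp (-(σ₂/2)*s)) = f s := by
        simp only [hfdef]
        have hee : Real.exp (σ₁*s) * Real.exp (-(σ₂/2)*s)
            = Real.exp (-(σ₂/2-σ₁)*s) := by
          rw [← Real.exp_add]; congr 1; ring
        calc Real.exp (σ₁*s) * (2^σ₂ * Real.exp (-(σ₂/2)*s))
            = 2^σ₂ * (Real.exp (σ₁*s) * Real.exp (-(σ₂/2)*s)) := by ring
          _ = 2^σ₂ * Real.exp (-(σ₂/2-σ₁)*s) := by rw [hee]
      have : Real.exp (σ₁ * s) * (1 + m) ^ (-σ₂) ≤ f s := by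
        rw [← h4']
        apply mul_le_mul_of_nonneg_left _ (Real.exp_pos _).le
        rw [← h3']; exact h2'
      have hgge : f s ≤ g s := by
        simp only [hgdef]
        exact le_add_of_nonneg_right (Set.indicator_nonneg (fun x _ => hw0 x) s)
      linarith
    rcases le_or_gt (2*a) (Real.exp (s/2)) with hA | h2a
    · apply regionA
      have habs : |Real.exp (s/2) - a| = Real.exp (s/2) - a :=
        abs_of_nonneg (by linarith)
      exact le_min (by rw [habs]; linarith) (by linarith)
    rcases le_or_gt (Real.exp (s/2)) (a/2) with hA' | hgt
    · apply regionA
      have habs : |Real.exp (s/2) - a| = a - Real.exp (s/2) := by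
        rw [abs_of_nonpos (by linarith)]; ring
      exact le_min (by rw [habs]; linarith) (by linarith)
    · -- middle region
      have ha0 : 0 < a := by nlinarith
      have hta : Real.exp (t/2) = a := by
        rw [show t/2 = Real.log a by rw [htdef]; ring, Real.exp_log ha0]
      have hlogx : Real.log (Real.exp (s/2)) = s/2 := Real.log_exp _
      have hup : s ≤ t + L := by
        have := Real.log_lt_log hx0 h2a
        rw [hlogx, Real.log_mul (by norm_num) ha0.ne'] at this
        rw [htdef, hLdef]; linarith
      have hlow : t - L ≤ s := by
        have := Real.log_lt_log (by positivity : (0:ℝ) < a/2) hgt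
        rw [hlogx, Real.log_div ha0.ne' (by norm_num)] at this
        rw [htdef, hLdef]; linarith
      have hsmem : s ∈ Set.Icc (t-L) (t+L) := ⟨hlow, hup⟩
      have habsst : |s - t| ≤ L := abs_le.mpr ⟨by linarith, by linarith⟩
      have key : (a/4)*|s-t| ≤ |Real.exp (s/2) - a| := by
        rcases le_total t s with hts | hst
        · have h5 : Real.exp (s/2) = a * Real.exp ((s-t)/2) := by
            rw [← hta, ← Real.exp_add]; congr 1; ring
          have h6 := Real.add_one_le_exp ((s-t)/2)
          have h7 : a + a*((s-t)/2) ≤ Real.exp (s/2) := by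
            rw [h5]
            have := mul_le_mul_of_nonneg_left h6 ha0.le
            linarith
          have hprod : 0 ≤ a*(s-t) := mul_nonneg ha0.le (by linarith)
          have e1 : |s - t| = s - t := abs_of_nonneg (by linarith)
          have e2 : |Real.exp (s/2) - a| = Real.exp (s/2) - a :=
            abs_of_nonneg (by linarith)
          rw [e1, e2]
          linarith
        · have h5 : a = Real.exp (s/2) * Real.exp ((t-s)/2) := by
            rw [← hta, ← Real.exp_add]; congr 1; ring
          have h6 := Real.add_one_le_exp ((t-s)/2)
          have h7 : Real.exp (s/2) + Real.exp (s/2)*((t-s)/2) ≤ a := by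
            rw [h5]
            have := mul_le_mul_of_nonneg_left h6 hx0.le
            linarith
          have hprod2 : 0 ≤ Real.exp (s/2)*(t-s) := mul_nonneg hx0.le (by linarith)
          have hxa : Real.exp (s/2) ≤ a := by linarith
          have hp : 0 ≤ (Real.exp (s/2) - a/2)*(t-s) :=
            mul_nonneg (by linarith) (by linarith)
          have e1 : |s - t| = -(s - t) := abs_of_nonpos (by linarith)
          have e2 : |Real.exp (s/2) - a| = -(Real.exp (s/2) - a) :=
            abs_of_nonpos (by linarith)
          rw [e1, e2]
          linarith [hp, h7]
      have keyx : (a/4)*|s-t| ≤ Real.exp (s/2) := by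
        have : (a/4)*|s-t| ≤ (a/4)*L := by
          apply mul_le_mul_of_nonneg_left habsst (by positivity)
        rw [hLdef] at this
        nlinarith
      have hkm : (a/4)*|s-t| ≤ m := le_min key keyx
      have hstep : (1 + m) ^ (-σ₂) ≤ (1+(a/4)*|s-t|)^(-τ) := by
        calc (1 + m) ^ (-σ₂) ≤ (1+(a/4)*|s-t|)^(-σ₂) :=
              Real.rpow_le_rpow_of_nonpos (by positivity) (by linarith) (by linarith)
          _ ≤ (1+(a/4)*|s-t|)^(-τ) := by
              apply Real.rpow_le_rpow_of_exponent_le _ (by linarith)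
              have : (0:ℝ) ≤ (a/4)*|s-t| := by positivity
              linarith
      have hexp : Real.exp (σ₁*s) ≤ 2*a^(2*σ₁) := by
        calc Real.exp (σ₁*s) ≤ Real.exp (σ₁*(t+L)) :=
              Real.exp_le_exp.mpr (mul_le_mul_of_nonneg_left hup h1)
          _ = Real.exp (σ₁*t) * Real.exp (σ₁*L) := by
              rw [← Real.exp_add]; congr 1; ring
          _ = a^(2*σ₁) * Real.exp (σ₁*L) := by
              rw [show σ₁*t = Real.log a * (2*σ₁) by rw [htdef]; ring,
                ← Real.rpow_def_of_pos ha0]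
          _ = a^(2*σ₁) * (2:ℝ)^(2*σ₁) := by
              rw [show σ₁*L = Real.log 2 * (2*σ₁) by rw [hLdef]; ring,
                ← Real.rpow_def_of_pos (by norm_num : (0:ℝ) < 2)]
          _ ≤ a^(2*σ₁) * 2 := by
              have h2σ : (2:ℝ)^(2*σ₁) ≤ (2:ℝ)^(1:ℝ) :=
                Real.rpow_le_rpow_of_exponent_le one_le_two (by linarith)
              rw [Real.rpow_one] at h2σ
              exact mul_le_mul_of_nonneg_left h2σ (Real.rpow_nonneg ha0.le _)
          _ = 2*a^(2*σ₁) := by ring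
      have hfinal : Real.exp (σ₁ * s) * (1 + m) ^ (-σ₂) ≤ w s := by
        simp only [hwdef]
        apply mul_le_mul hexp hstep (Real.rpow_nonneg (by positivity) _)
        positivity
      have : g s = f s + w s := by
        simp only [hgdef, Set.indicator_of_mem hsmem]
      rw [this]
      have := hf0 s
      linarith
  -- measurability of the integrand
  have hFmeas : Measurable (fun s => Real.exp (σ₁ * s) * (1 + |Φ s|) ^ (-σ₂)) := by
    have h1' : (fun s => (1 + |Φ s|) ^ (-σ₂))
        = fun s => Real.exp (Real.log (1 + |Φ s|) * (-σ₂)) := by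
      funext s
      rw [Real.rpow_def_of_pos (by positivity)]
    apply Measurable.mul
    · exact Real.measurable_exp.comp (measurable_id.const_mul σ₁)
    · rw [h1']
      exact Real.measurable_exp.comp
        ((Real.measurable_log.comp (measurable_const.add hΦ.abs)).mul_const _)
  have hF0 : ∀ s, 0 ≤ Real.exp (σ₁ * s) * (1 + |Φ s|) ^ (-σ₂) := fun s => by
    have := Real.rpow_nonneg (by positivity : (0:ℝ) ≤ 1 + |Φ s|) (-σ₂)
    positivity
  have hIci : Set.Ici s₀ ⊆ Set.Ici (0:ℝ) := Set.Ici_subset_Ici.mpr hs₀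
  have hgints₀ : IntegrableOn g (Set.Ici s₀) := hgint.mono_set hIci
  have hFint : IntegrableOn (fun s => Real.exp (σ₁ * s) * (1 + |Φ s|) ^ (-σ₂))
      (Set.Ici s₀) := by
    apply Integrable.mono' hgints₀ hFmeas.aestronglyMeasurable
    refine (ae_restrict_iff' measurableSet_Ici).mpr (Filter.Eventually.of_forall fun s hs => ?_)
    rw [Real.norm_eq_abs, abs_of_nonneg (hF0 s)]
    exact hpt s hs
  refine ⟨hFint, ?_⟩
  have step1 : ∫ s in Set.Ici s₀, Real.exp (σ₁ * s) * (1 + |Φ s|) ^ (-σ₂)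
      ≤ ∫ s in Set.Ici s₀, g s :=
    setIntegral_mono_on hFint hgints₀ measurableSet_Ici hpt
  have step2 : ∫ s in Set.Ici s₀, g s ≤ ∫ s in Set.Ici (0:ℝ), g s :=
    setIntegral_mono_set hgint (ae_of_all _ hg0)
      (HasSubset.Subset.eventuallyLE hIci)
  have step3 : ∫ s in Set.Ici (0:ℝ), g s
      = (∫ s in Set.Ici (0:ℝ), f s)
        + ∫ s in Set.Ici (0:ℝ), (Set.Icc (t-L) (t+L)).indicator w s := by
    simp only [hgdef]
    exact integral_add hfint hindint.integrableOn
  have step4 : ∫ s in Set.Ici (0:ℝ), (Set.Icc (t-L) (t+L)).indicator w s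
      ≤ ∫ s in Set.Icc (t-L) (t+L), w s := by
    rw [setIntegral_indicator measurableSet_Icc]
    exact setIntegral_mono_set hwIcc (ae_of_all _ hw0)
      (HasSubset.Subset.eventuallyLE Set.inter_subset_right)
  have step5 : ∫ s in Set.Icc (t-L) (t+L), w s ≤ max B (8*Real.log 2) := by
    rcases le_or_gt (1/2 : ℝ) a with ha2 | ha2
    · have hc0 : (0:ℝ) < a/4 := by linarith
      have : ∫ s in Set.Icc (t-L) (t+L), w s
          = (2*a^(2*σ₁)) * ∫ s in Set.Icc (t-L) (t+L), (1+(a/4)*|s-t|)^(-τ) := by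
        simp only [hwdef]
        exact integral_const_mul _ _
      rw [this, window_eq (a/4) τ L t hc0 hτ1 hL0.le, hLdef]
      exact le_trans (hB a ha2) (le_max_left _ _)
    · have hwle : ∀ s ∈ Set.Icc (t-L) (t+L), w s ≤ 2 := by
        intro s _
        simp only [hwdef]
        have k1 : a^(2*σ₁) ≤ 1 := Real.rpow_le_one ha (by linarith) (by linarith)
        have k2 : (1+(a/4)*|s-t|)^(-τ) ≤ 1 := by
          apply Real.rpow_le_one_of_one_le_of_nonpos _ (by linarith)
          have : (0:ℝ) ≤ (a/4)*|s-t| := by positivity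
          linarith
        have k3 : (0:ℝ) ≤ (1+(a/4)*|s-t|)^(-τ) :=
          Real.rpow_nonneg (by positivity) _
        nlinarith
      calc ∫ s in Set.Icc (t-L) (t+L), w s ≤ ∫ _ in Set.Icc (t-L) (t+L), (2:ℝ) :=
            setIntegral_mono_on hwIcc
              (integrableOn_const measure_Icc_lt_top.ne)
              measurableSet_Icc hwle
        _ = (volume (Set.Icc (t-L) (t+L))).toReal * 2 := by
            rw [setIntegral_const, smul_eq_mul]; rfl
        _ ≤ max B (8*Real.log 2) := by
            rw [Real.volume_Icc, ENNReal.toReal_ofReal (by linarith)]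
            have : (t+L - (t-L)) * 2 = 8 * Real.log 2 := by rw [hLdef]; ring
            rw [this]
            exact le_max_right _ _
  calc ∫ s in Set.Ici s₀, Real.exp (σ₁ * s) * (1 + |Φ s|) ^ (-σ₂)
      ≤ ∫ s in Set.Ici (0:ℝ), g s := le_trans step1 step2
    _ = (∫ s in Set.Ici (0:ℝ), f s)
        + ∫ s in Set.Ici (0:ℝ), (Set.Icc (t-L) (t+L)).indicator w s := step3
    _ ≤ (∫ s in Set.Ici (0:ℝ), f s) + max B (8*Real.log 2) := by
        have := le_trans step4 step5
        linarith
end
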